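/- There exists γ0 > 0 such that for every γ ∈ (0, γ0] there exists n0 ∈ ℕ with the following property for every even integer n ≥ n0. If G is an n-vertex graph with σ(G) ≥ n − γn, then one of the following holds: (i) G admits a perfect matching; (ii) G contains a 2γ-independent set of size at least n/2; (iii) G has exactly two connected components C_1 and C_2, both of odd order, and moreover for each i ∈ {1,2}, if |C_i| ≤ (1−γ)n/2 then C_i induces a clique. -/

import Mathlib

/-- The number of edges of `G` with both endpoints in the vertex set `T`. -/
noncomputable def edgesWithin {V : Type*} [Fintype V] [DecidableEq V]
    (G : SimpleGraph V) [DecidableRel G.Adj] (T : Finset V) : ℕ :=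
  (G.edgeFinset.filter (fun e => e ∈ T.sym2)).card


open Finset

section Basic

variable {V : Type*}

/-- Build a perfect matching subgraph from a fixed-point-free involution. -/
lemma matchFun (H : SimpleGraph V) (ψ : V → V)
    (hinv : Function.Involutive ψ) (hne : ∀ v, ψ v ≠ v) (hadj : ∀ v, H.Adj v (ψ v)) :
    ∃ M : H.Subgraph, M.IsPerfectMatching := by
  refine ⟨⟨Set.univ, fun a b => ψ a = b, ?_, ?_, ?_⟩, ?_⟩
  · intro v w h
    subst h
    exact hadj v
  · intro v w _
    exact trivial
  · refine ⟨fun v w h => ?_⟩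
    subst h
    exact hinv v
  · rw [SimpleGraph.Subgraph.isPerfectMatching_iff]
    intro v
    exact ⟨ψ v, rfl, fun w h => Eq.symm h⟩

/-- Extract a partner function from a perfect matching. -/
lemma funMatch {H : SimpleGraph V} {M : H.Subgraph} (hM : M.IsPerfectMatching) :
    ∃ ψ : V → V, Function.Involutive ψ ∧ (∀ v, ψ v ≠ v) ∧ ∀ v, H.Adj v (ψ v) := by
  rw [SimpleGraph.Subgraph.isPerfectMatching_iff] at hM
  choose ψ h1 h2 using hM
  refine ⟨ψ, fun v => ?_, fun v => ?_, fun v => M.adj_sub (h1 v)⟩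
  · exact (h2 (ψ v) v (h1 v).symm).symm
  · intro h
    have := h1 v
    rw [h] at this
    exact (M.adj_sub this).ne rfl

/-- An even finset can be paired up by a fixed-point-free involution supported on it. -/
lemma pairup [DecidableEq V] :
    ∀ (k : ℕ) (s : Finset V), s.card = k → Even k →
      ∃ ψ : V → V, Function.Involutive ψ ∧ (∀ v ∈ s, ψ v ∈ s ∧ ψ v ≠ v) ∧
        ∀ v, v ∉ s → ψ v = v := by
  intro k
  induction k using Nat.strong_induction_on with
  | _ k ih =>
    intro s hcard heven
    rcases Nat.eq_zero_or_pos k with h0 | hpos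
    · subst h0
      have : s = ∅ := Finset.card_eq_zero.mp hcard
      subst this
      exact ⟨id, fun v => rfl, by simp, fun v _ => rfl⟩
    · have h2 : 2 ≤ k := by
        rcases heven with ⟨m, hm⟩; omega
      obtain ⟨a, ha⟩ : s.Nonempty := Finset.card_pos.mp (by omega)
      obtain ⟨b, hb, hba⟩ : ∃ b ∈ s, b ≠ a := Finset.exists_mem_ne (by omega) a
      set t := s \ {a, b} with ht
      have htcard : t.card = k - 2 := by
        rw [ht, Finset.card_sdiff_of_subset (by intro z hz; simp at hz; rcases hz with rfl | rfl <;> assumption)]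
        rw [hcard, Finset.card_pair (fun h => hba h.symm)]
      have hteven : Even (k - 2) := by rcases heven with ⟨m, hm⟩; exact ⟨m - 1, by omega⟩
      obtain ⟨ψ, hinv, hmem, hid⟩ := ih (k - 2) (by omega) t htcard hteven
      classical
      refine ⟨fun v => if v = a then b else if v = b then a else ψ v, ?_, ?_, ?_⟩
      · intro v
        by_cases hva : v = a
        · simp [hva, hba]
        · by_cases hvb : v = b
          · simp [hvb, Ne.symm hba, hba]
          · simp only [if_neg hva, if_neg hvb]
            by_cases hvt : v ∈ t
            · have h1 := (hmem v hvt).1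
              have hψa : ψ v ≠ a := by
                intro h; rw [h] at h1; simp [ht] at h1
              have hψb : ψ v ≠ b := by
                intro h; rw [h] at h1; simp [ht] at h1
              simp only [if_neg hψa, if_neg hψb]
              exact hinv v
            · rw [hid v hvt]
              simp [if_neg hva, if_neg hvb, hid v hvt]
      · intro v hv
        by_cases hva : v = a
        · simp only [if_pos hva]
          exact ⟨hb, by rw [hva]; exact hba⟩
        · by_cases hvb : v = b
          · have hva' : v ≠ a := by rw [hvb]; exact hba
            simp only [if_neg hva', if_pos hvb]
            exact ⟨ha, by rw [hvb]; exact Ne.symm hba⟩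
          · have hvt : v ∈ t := by simp [ht, hv, hva, hvb]
            obtain ⟨h1, h2⟩ := hmem v hvt
            simp only [if_neg hva, if_neg hvb]
            constructor
            · exact (Finset.sdiff_subset) h1
            · exact h2
      · intro v hv
        have hva : v ≠ a := fun h => hv (h ▸ ha)
        have hvb : v ≠ b := fun h => hv (h ▸ hb)
        simp only [if_neg hva, if_neg hvb]
        exact hid v (fun h => hv (Finset.sdiff_subset h))

end Basic
open Finset

section Swaps

variable {V : Type*} [DecidableEq V] {H : SimpleGraph V} {φ : V → V} {x y : V}

lemma matchFun' (H : SimpleGraph V) (ψ : V → V)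
    (hinv : Function.Involutive ψ) (hne : ∀ v, ψ v ≠ v) (hadj : ∀ v, H.Adj v (ψ v)) :
    ∃ M : H.Subgraph, M.IsPerfectMatching := by
  refine ⟨⟨Set.univ, fun a b => ψ a = b, ?_, ?_, ?_⟩, ?_⟩
  · intro v w h
    subst h
    exact hadj v
  · intro v w _
    exact trivial
  · refine ⟨fun v w h => ?_⟩
    subst h
    exact hinv v
  · rw [SimpleGraph.Subgraph.isPerfectMatching_iff]
    intro v
    exact ⟨ψ v, rfl, fun w h => Eq.symm h⟩

/-- Re-pair a near-perfect matching `φ` (exposing `x,y`) on a closed finite set `s`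
using `σ`, producing a perfect matching; contradiction with matching-freeness. -/
lemma repair (hfree : H.IsMatchingFree)
    (hinv : Function.Involutive φ) (hne : ∀ v, φ v ≠ v)
    (hxy : φ x = y) (hadj : ∀ v, v ≠ x → v ≠ y → H.Adj v (φ v))
    (s : Finset V) (hx : x ∈ s)
    (hclosed : ∀ v ∈ s, φ v ∈ s)
    (σ : V → V) (hσs : ∀ v ∈ s, σ v ∈ s) (hσinv : ∀ v ∈ s, σ (σ v) = v)
    (hσne : ∀ v ∈ s, σ v ≠ v) (hσadj : ∀ v ∈ s, H.Adj v (σ v)) : False := by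
  have hy : y ∈ s := hxy ▸ hclosed x hx
  have hnotin : ∀ v, v ∉ s → φ v ∉ s := by
    intro v hv hφv
    exact hv (hinv v ▸ hclosed _ hφv)
  set ψ : V → V := fun v => if v ∈ s then σ v else φ v with hψ
  have hInv : Function.Involutive ψ := by
    intro v
    by_cases hv : v ∈ s
    · have h1 : ψ v = σ v := if_pos hv
      have h2 : σ v ∈ s := hσs v hv
      rw [h1, hψ]
      simp only [if_pos h2]
      exact hσinv v hv
    · have h1 : ψ v = φ v := if_neg hv
      have h2 : φ v ∉ s := hnotin v hv
      rw [h1, hψ]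
      simp only [if_neg h2]
      exact hinv v
  have hNe : ∀ v, ψ v ≠ v := by
    intro v
    by_cases hv : v ∈ s
    · rw [hψ]; simp only [if_pos hv]; exact hσne v hv
    · rw [hψ]; simp only [if_neg hv]; exact hne v
  have hAdj : ∀ v, H.Adj v (ψ v) := by
    intro v
    by_cases hv : v ∈ s
    · rw [hψ]; simp only [if_pos hv]; exact hσadj v hv
    · rw [hψ]; simp only [if_neg hv]
      exact hadj v (fun h => hv (h ▸ hx)) (fun h => hv (h ▸ hy))
  obtain ⟨M, hM⟩ := matchFun' H ψ hInv hNe hAdj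
  exact hfree M hM

/-- No "length 3 augmenting path": if `x ~ w` and `y ~ φ w` then we could rematch. -/
lemma swap2 (hfree : H.IsMatchingFree)
    (hinv : Function.Involutive φ) (hne : ∀ v, φ v ≠ v)
    (hxy : φ x = y) (hadj : ∀ v, v ≠ x → v ≠ y → H.Adj v (φ v))
    {w : V} (hwx : w ≠ x) (hwy : w ≠ y) (h1 : H.Adj x w) (h2 : H.Adj y (φ w)) : False := by
  have hyx : φ y = x := by rw [← hxy, hinv]
  have hxny : x ≠ y := fun h => hne y (h ▸ hxy)
  have hφwx : φ w ≠ x := fun h => hwy (by have := congrArg φ h; rwa [hinv w, hxy] at this)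
  have hφwy : φ w ≠ y := fun h => hwx (by have := congrArg φ h; rwa [hinv w, hyx] at this)
  have hφww : φ w ≠ w := hne w
  set s : Finset V := {x, y, w, φ w} with hs
  set σ : V → V := fun v => if v = x then w else if v = w then x
    else if v = y then φ w else if v = φ w then y else v with hσ
  have emem : ∀ v, v ∈ s ↔ (v = x ∨ v = y ∨ v = w ∨ v = φ w) := by
    intro v; simp [hs]
  have ex : σ x = w := by rw [hσ]; simp [hxny, Ne.symm hwx]
  have ew : σ w = x := by rw [hσ]; simp [hwx]
  have ey : σ y = φ w := by rw [hσ]; simp [Ne.symm hxny, Ne.symm hwy]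
  have eφw : σ (φ w) = y := by rw [hσ]; simp [hφwx, hφww, hφwy]
  refine repair hfree hinv hne hxy hadj s ?_ ?_ σ ?_ ?_ ?_ ?_
  · rw [emem]; tauto
  · intro v hv
    rw [emem] at hv ⊢
    rcases hv with rfl | rfl | rfl | rfl
    · rw [hxy]; tauto
    · rw [hyx]; tauto
    · tauto
    · rw [hinv]; tauto
  · intro v hv
    rw [emem] at hv
    rcases hv with rfl | rfl | rfl | rfl <;>
      simp only [ex, ew, ey, eφw] <;> rw [emem] <;> tauto
  · intro v hv
    rw [emem] at hv
    rcases hv with rfl | rfl | rfl | rfl <;> simp only [ex, ew, ey, eφw, hinv]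
  · intro v hv
    rw [emem] at hv
    rcases hv with rfl | rfl | rfl | rfl <;> simp only [ex, ew, ey, eφw] <;>
      first | assumption | (apply Ne.symm; assumption)
  · intro v hv
    rw [emem] at hv
    rcases hv with rfl | rfl | rfl | rfl <;> simp only [ex, ew, ey, eφw] <;>
      first | assumption | (apply SimpleGraph.Adj.symm; assumption)

/-- No "length 5 augmenting path". -/
lemma swap3 (hfree : H.IsMatchingFree)
    (hinv : Function.Involutive φ) (hne : ∀ v, φ v ≠ v)
    (hxy : φ x = y) (hadj : ∀ v, v ≠ x → v ≠ y → H.Adj v (φ v))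
    {w r : V} (hwx : w ≠ x) (hwy : w ≠ y) (hrx : r ≠ x) (hry : r ≠ y)
    (hrw : r ≠ w) (hrφw : r ≠ φ w)
    (h1 : H.Adj x w) (h2 : H.Adj (φ w) r) (h3 : H.Adj y (φ r)) : False := by
  have hyx : φ y = x := by rw [← hxy, hinv]
  have hxny : x ≠ y := fun h => hne y (h ▸ hxy)
  have hφwx : φ w ≠ x := fun h => hwy (by have := congrArg φ h; rwa [hinv w, hxy] at this)
  have hφwy : φ w ≠ y := fun h => hwx (by have := congrArg φ h; rwa [hinv w, hyx] at this)
  have hφww : φ w ≠ w := hne w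
  have hφrx : φ r ≠ x := fun h => hry (by have := congrArg φ h; rwa [hinv r, hxy] at this)
  have hφry : φ r ≠ y := fun h => hrx (by have := congrArg φ h; rwa [hinv r, hyx] at this)
  have hφrr : φ r ≠ r := hne r
  have hφrw : φ r ≠ w := fun h => hrφw (by have := congrArg φ h; rwa [hinv r] at this)
  have hφrφw : φ r ≠ φ w := fun h => hrw (by have := congrArg φ h; rwa [hinv r, hinv w] at this)
  set s : Finset V := {x, y, w, φ w, r, φ r} with hs
  set σ : V → V := fun v => if v = x then w else if v = w then x
    else if v = y then φ r else if v = φ r then y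
    else if v = φ w then r else if v = r then φ w else v with hσ
  have emem : ∀ v, v ∈ s ↔ (v = x ∨ v = y ∨ v = w ∨ v = φ w ∨ v = r ∨ v = φ r) := by
    intro v; simp [hs]
  have ex : σ x = w := by rw [hσ]; simp [hxny, Ne.symm hwx]
  have ew : σ w = x := by rw [hσ]; simp [hwx]
  have ey : σ y = φ r := by rw [hσ]; simp [Ne.symm hxny, Ne.symm hwy]
  have eφr : σ (φ r) = y := by rw [hσ]; simp [hφrx, hφrw, hφry, hφrr]
  have eφw : σ (φ w) = r := by rw [hσ]; simp [hφwx, hφww, hφwy, Ne.symm hφrφw]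
  have er : σ r = φ w := by rw [hσ]; simp [hrx, hrw, hry, Ne.symm hφrr, hrφw]
  refine repair hfree hinv hne hxy hadj s ?_ ?_ σ ?_ ?_ ?_ ?_
  · rw [emem]; tauto
  · intro v hv
    rw [emem] at hv ⊢
    rcases hv with rfl | rfl | rfl | rfl | rfl | rfl
    · rw [hxy]; tauto
    · rw [hyx]; tauto
    · tauto
    · rw [hinv]; tauto
    · tauto
    · rw [hinv]; tauto
  · intro v hv
    rw [emem] at hv
    rcases hv with rfl | rfl | rfl | rfl | rfl | rfl <;>
      simp only [ex, ew, ey, eφr, eφw, er] <;> rw [emem] <;> tauto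
  · intro v hv
    rw [emem] at hv
    rcases hv with rfl | rfl | rfl | rfl | rfl | rfl <;>
      simp only [ex, ew, ey, eφr, eφw, er, hinv]
  · intro v hv
    rw [emem] at hv
    rcases hv with rfl | rfl | rfl | rfl | rfl | rfl <;>
      simp only [ex, ew, ey, eφr, eφw, er] <;>
      first | assumption | (apply Ne.symm; assumption)
  · intro v hv
    rw [emem] at hv
    rcases hv with rfl | rfl | rfl | rfl | rfl | rfl <;>
      simp only [ex, ew, ey, eφr, eφw, er] <;>
      first | assumption | (apply SimpleGraph.Adj.symm; assumption)

end Swaps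
open Finset

section Helpers

variable {V : Type*} [Fintype V] [DecidableEq V]

/-- Three pairwise nonadjacent vertices with pairwise disjoint neighborhoods
contradict the degree-sum condition. -/
lemma triple_contra {n : ℕ} (hn : Fintype.card V = n) {γ : ℝ} (hγ0 : 0 < γ) (hγ : γ ≤ 1/100)
    (H : SimpleGraph V) [DecidableRel H.Adj]
    (hσ : ∀ x y : V, x ≠ y → ¬ H.Adj x y →
      (n : ℝ) - γ * n ≤ (H.degree x : ℝ) + (H.degree y : ℝ))
    {a b c : V} (hab : a ≠ b) (hac : a ≠ c) (hbc : b ≠ c)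
    (nab : ¬H.Adj a b) (nac : ¬H.Adj a c) (nbc : ¬H.Adj b c)
    (dab : H.neighborFinset a ∩ H.neighborFinset b = ∅)
    (dac : H.neighborFinset a ∩ H.neighborFinset c = ∅)
    (dbc : H.neighborFinset b ∩ H.neighborFinset c = ∅) : False := by
  have hsub : H.neighborFinset a ∪ H.neighborFinset b ∪ H.neighborFinset c ⊆
      Finset.univ \ {a, b, c} := by
    intro v hv
    simp only [Finset.mem_union, SimpleGraph.mem_neighborFinset] at hv
    simp only [Finset.mem_sdiff, Finset.mem_univ, true_and, Finset.mem_insert,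
      Finset.mem_singleton]
    push_neg
    refine ⟨?_, ?_, ?_⟩ <;> rintro rfl
    · rcases hv with (h | h) | h
      · exact H.irrefl h
      · exact nab h.symm
      · exact nac h.symm
    · rcases hv with (h | h) | h
      · exact nab h
      · exact H.irrefl h
      · exact nbc h.symm
    · rcases hv with (h | h) | h
      · exact nac h
      · exact nbc h
      · exact H.irrefl h
  have hdisj1 : Disjoint (H.neighborFinset a) (H.neighborFinset b) :=
    Finset.disjoint_iff_inter_eq_empty.mpr dab
  have hdisj2 : Disjoint (H.neighborFinset a ∪ H.neighborFinset b) (H.neighborFinset c) := by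
    rw [Finset.disjoint_iff_inter_eq_empty, Finset.union_inter_distrib_right, dac, dbc]
    simp
  have hcard3 : ({a, b, c} : Finset V).card = 3 := by
    rw [Finset.card_insert_of_notMem (by simp [hab, hac]),
      Finset.card_insert_of_notMem (by simp [hbc]), Finset.card_singleton]
  have h3n : 3 ≤ n := by
    rw [← hcard3, ← hn]
    exact Finset.card_le_univ _
  have hcardsum : H.degree a + H.degree b + H.degree c ≤ n - 3 := by
    have h1 := Finset.card_le_card hsub
    rw [Finset.card_union_of_disjoint hdisj2, Finset.card_union_of_disjoint hdisj1] at h1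
    rw [Finset.card_sdiff_of_subset (Finset.subset_univ _), hcard3, Finset.card_univ, hn] at h1
    exact h1
  have hreal : (H.degree a : ℝ) + H.degree b + H.degree c ≤ (n : ℝ) - 3 := by
    have := (Nat.cast_le (α := ℝ)).mpr hcardsum
    push_cast [Nat.cast_sub h3n] at this
    push_cast
    linarith
  have s1 := hσ a b hab nab
  have s2 := hσ a c hac nac
  have s3 := hσ b c hbc nbc
  have hγn : γ * n ≤ (n : ℝ) / 100 := by
    have : (0:ℝ) ≤ n := Nat.cast_nonneg n
    nlinarith
  linarith

/-- Counting edges inside `T`: every edge inside `T` has an endpoint in `D`. -/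
lemma edges_in_bound (H : SimpleGraph V) [DecidableRel H.Adj] (T D : Finset V)
    (hind : ∀ a ∈ T, ∀ b ∈ T, a ∉ D → b ∉ D → ¬H.Adj a b) :
    (H.edgeFinset.filter (fun e => e ∈ T.sym2)).card ≤ D.card * T.card := by
  classical
  have hsub : H.edgeFinset.filter (fun e => e ∈ T.sym2) ⊆
      D.biUnion (fun w => (T.filter (H.Adj w ·)).image (fun t => s(w, t))) := by
    intro e he
    rw [Finset.mem_filter, SimpleGraph.mem_edgeFinset] at he
    obtain ⟨he1, he2⟩ := he
    induction e with
    | _ u v =>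
      rw [SimpleGraph.mem_edgeSet] at he1
      rw [Finset.mem_sym2_iff] at he2
      have hu : u ∈ T := he2 u (by simp)
      have hv : v ∈ T := he2 v (by simp)
      have hD : u ∈ D ∨ v ∈ D := by
        by_contra hc
        push_neg at hc
        exact hind u hu v hv hc.1 hc.2 he1
      rw [Finset.mem_biUnion]
      rcases hD with h | h
      · exact ⟨u, h, Finset.mem_image.mpr ⟨v, Finset.mem_filter.mpr ⟨hv, he1⟩, rfl⟩⟩
      · exact ⟨v, h, Finset.mem_image.mpr ⟨u, Finset.mem_filter.mpr ⟨hu, he1.symm⟩,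
          Sym2.eq_swap⟩⟩
  calc (H.edgeFinset.filter (fun e => e ∈ T.sym2)).card
      ≤ (D.biUnion (fun w => (T.filter (H.Adj w ·)).image (fun t => s(w, t)))).card :=
        Finset.card_le_card hsub
    _ ≤ ∑ w ∈ D, ((T.filter (H.Adj w ·)).image (fun t => s(w, t))).card :=
        Finset.card_biUnion_le
    _ ≤ ∑ w ∈ D, T.card := by
        apply Finset.sum_le_sum
        intro w _
        exact le_trans Finset.card_image_le (Finset.card_le_card (Finset.filter_subset _ _))
    _ = D.card * T.card := by rw [Finset.sum_const, smul_eq_mul]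

/-- Vertices in a component lie on one side of a separation. -/
lemma side_of_reachable {G : SimpleGraph V} {Q : Finset V}
    (hsep : ∀ a b : V, a ∈ Q → b ∉ Q → ¬G.Adj a b) {a b : V}
    (h : G.Reachable a b) : a ∈ Q ↔ b ∈ Q := by
  obtain ⟨w⟩ := h
  induction w with
  | nil => rfl
  | cons h p ih =>
    rename_i u v _
    rw [← ih]
    constructor
    · intro hu
      by_contra hv
      exact hsep u v hu hv h
    · intro hv
      by_contra hu
      exact hsep v u hv hu h.symm

lemma degree_mono {G H : SimpleGraph V} [DecidableRel G.Adj] [DecidableRel H.Adj]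
    (h : G ≤ H) (v : V) : G.degree v ≤ H.degree v := by
  apply Finset.card_le_card
  intro w hw
  rw [SimpleGraph.mem_neighborFinset] at hw ⊢
  exact h hw

end Helpers

/-- A fixed-point-free involution on a finset pairs it up; the "lower halves" form half. -/
lemma half_pairing [LinearOrder V] (φ : V → V) (hinv : Function.Involutive φ)
    (s : Finset V) (hclosed : ∀ v ∈ s, φ v ∈ s) (hne : ∀ v ∈ s, φ v ≠ v) :
    2 * (s.filter (fun w => w < φ w)).card = s.card := by
  classical
  have hsplit := Finset.card_filter_add_card_filter_not
    (s := s) (p := fun w => w < φ w)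
  have hbij : (s.filter (fun w => ¬ w < φ w)).card = (s.filter (fun w => w < φ w)).card := by
    apply Finset.card_bij (fun w _ => φ w)
    · intro w hw
      rw [Finset.mem_filter] at hw ⊢
      obtain ⟨hw1, hw2⟩ := hw
      refine ⟨hclosed w hw1, ?_⟩
      rw [hinv w]
      exact lt_of_le_of_ne (not_lt.mp hw2) (hne w hw1)
    · intro w hw w' hw' h
      have := congrArg φ h
      rwa [hinv, hinv] at this
    · intro d hd
      rw [Finset.mem_filter] at hd
      refine ⟨φ d, ?_, hinv d⟩
      rw [Finset.mem_filter, hinv]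
      exact ⟨hclosed d hd.1, not_lt.mpr (le_of_lt hd.2)⟩
  omega
section PairMain
open Finset

set_option maxHeartbeats 2000000 in
lemma pair_main {n : ℕ} {γ : ℝ} (hγ0 : 0 < γ) (hγ : γ ≤ 1/100)
    (hγn : (1000:ℝ) ≤ γ * n) (heven : Even n)
    (H : SimpleGraph (Fin n)) [DecidableRel H.Adj]
    (hfree : H.IsMatchingFree)
    (hmax : ∀ G' : SimpleGraph (Fin n), H < G' → ∃ M : G'.Subgraph, M.IsPerfectMatching)
    (hσ : ∀ x y : Fin n, x ≠ y → ¬ H.Adj x y →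
      (n : ℝ) - γ * n ≤ (H.degree x : ℝ) + (H.degree y : ℝ))
    {x y : Fin n} (hxyne : x ≠ y) (hnadj : ¬ H.Adj x y)
    (hS : (H.neighborFinset x ∩ H.neighborFinset y).Nonempty) :
    ∃ T : Finset (Fin n), (n : ℝ) / 2 ≤ T.card ∧
      ((H.edgeFinset.filter (fun e => e ∈ T.sym2)).card : ℝ) ≤ 2 * γ * (n:ℝ) ^ 2 := by
  classical
  -- basic numeric facts
  have hn0 : (0:ℝ) ≤ n := Nat.cast_nonneg n
  have hγn100 : γ * n ≤ (n:ℝ)/100 := by nlinarith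
  have hnbig : (100000:ℝ) ≤ n := by nlinarith
  -- a perfect matching of H ⊔ edge x y
  have hlt : H < H ⊔ SimpleGraph.edge x y := by
    refine lt_of_le_of_ne le_sup_left (fun h => hnadj ?_)
    have h2 : (H ⊔ SimpleGraph.edge x y).Adj x y := by
      rw [SimpleGraph.sup_adj, SimpleGraph.edge_adj]
      exact Or.inr ⟨Or.inl ⟨rfl, rfl⟩, hxyne⟩
    rwa [← h] at h2
  obtain ⟨M, hM⟩ := hmax _ hlt
  obtain ⟨φ, hinv, hneφ, hadj'⟩ := funMatch hM
  have hxyφ : φ x = y := by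
    by_contra hc
    have hyxφ : φ y ≠ x := fun h => hc (by rw [← h, hinv])
    have hall : ∀ v, H.Adj v (φ v) := by
      intro v
      have h := hadj' v
      rw [SimpleGraph.sup_adj] at h
      rcases h with h | h
      · exact h
      · rw [SimpleGraph.edge_adj] at h
        rcases h.1 with ⟨rfl, h2⟩ | ⟨rfl, h2⟩
        · exact absurd h2 hc
        · exact absurd h2 hyxφ
    obtain ⟨M', hM'⟩ := matchFun H φ hinv hneφ hall
    exact absurd hM' (hfree M')
  have hyxφ : φ y = x := by rw [← hxyφ, hinv]
  have hadjφ : ∀ v, v ≠ x → v ≠ y → H.Adj v (φ v) := by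
    intro v hvx hvy
    have h := hadj' v
    rw [SimpleGraph.sup_adj] at h
    rcases h with h | h
    · exact h
    · rw [SimpleGraph.edge_adj] at h
      rcases h.1 with ⟨h1, _⟩ | ⟨h1, _⟩
      · exact absurd h1 hvx
      · exact absurd h1 hvy
  have hφnx : ∀ v, v ≠ y → φ v ≠ x :=
    fun v hvy h => hvy (by have := congrArg φ h; rwa [hinv, hxyφ] at this)
  have hφny : ∀ v, v ≠ x → φ v ≠ y :=
    fun v hvx h => hvx (by have := congrArg φ h; rwa [hinv, hyxφ] at this)
  have hφinj : Function.Injective φ := hinv.injective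
  -- shorthand sets
  set X := H.neighborFinset x with hX
  set Y := H.neighborFinset y with hY
  set S := X ∩ Y with hSdef
  have hmemX : ∀ v, v ∈ X ↔ H.Adj x v := fun v => SimpleGraph.mem_neighborFinset _ _ _
  have hmemY : ∀ v, v ∈ Y ↔ H.Adj y v := fun v => SimpleGraph.mem_neighborFinset _ _ _
  have hxX : x ∉ X := fun h => H.irrefl ((hmemX x).mp h)
  have hyX : y ∉ X := fun h => hnadj ((hmemX y).mp h)
  have hxY : x ∉ Y := fun h => hnadj (((hmemY x).mp h)).symm
  have hyY : y ∉ Y := fun h => H.irrefl ((hmemY y).mp h)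
  have hSmem : ∀ p, p ∈ S → H.Adj x p ∧ H.Adj y p := by
    intro p hp
    rw [hSdef, Finset.mem_inter, hmemX, hmemY] at hp
    exact hp
  have hSne : ∀ p ∈ S, p ≠ x ∧ p ≠ y := by
    intro p hp
    obtain ⟨ha, hb⟩ := hSmem p hp
    exact ⟨fun h => H.irrefl (h ▸ ha), fun h => H.irrefl (h ▸ hb)⟩
  -- forbidden configurations
  have hF2 : ∀ w, w ≠ x → w ≠ y → H.Adj x w → H.Adj y (φ w) → False :=
    fun w h1 h2 h3 h4 => swap2 hfree hinv hneφ hxyφ hadjφ h1 h2 h3 h4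
  have hF2' : ∀ w, w ≠ y → w ≠ x → H.Adj y w → H.Adj x (φ w) → False :=
    fun w h1 h2 h3 h4 => swap2 hfree hinv hneφ hyxφ
      (fun v hvy hvx => hadjφ v hvx hvy) h1 h2 h3 h4
  have hAUG5 : ∀ w r, w ≠ x → w ≠ y → r ≠ x → r ≠ y → r ≠ w → r ≠ φ w →
      H.Adj x w → H.Adj (φ w) r → H.Adj y (φ r) → False :=
    fun w r a1 a2 a3 a4 a5 a6 b1 b2 b3 =>
      swap3 hfree hinv hneφ hxyφ hadjφ a1 a2 a3 a4 a5 a6 b1 b2 b3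
  have hAUG5' : ∀ w r, w ≠ y → w ≠ x → r ≠ y → r ≠ x → r ≠ w → r ≠ φ w →
      H.Adj y w → H.Adj (φ w) r → H.Adj x (φ r) → False :=
    fun w r a1 a2 a3 a4 a5 a6 b1 b2 b3 =>
      swap3 hfree hinv hneφ hyxφ (fun v hvy hvx => hadjφ v hvx hvy) a1 a2 a3 a4 a5 a6 b1 b2 b3
  -- basic facts about free ends
  have hqx : ∀ p ∈ S, ¬H.Adj x (φ p) := by
    intro p hp hc
    obtain ⟨h1, h2⟩ := hSne p hp
    exact hF2' p h2 h1 (hSmem p hp).2 hc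
  have hqy : ∀ p ∈ S, ¬H.Adj y (φ p) := by
    intro p hp hc
    obtain ⟨h1, h2⟩ := hSne p hp
    exact hF2 p h1 h2 (hSmem p hp).1 hc
  have hqq : ∀ p ∈ S, ∀ p' ∈ S, p ≠ p' → ¬H.Adj (φ p) (φ p') := by
    intro p hp p' hp' hne hc
    obtain ⟨h1, h2⟩ := hSne p hp
    obtain ⟨h1', h2'⟩ := hSne p' hp'
    refine hAUG5 p (φ p') h1 h2 (hφnx p' h2') (hφny p' h1') ?_ ?_
      (hSmem p hp).1 hc (by rw [hinv]; exact (hSmem p' hp').2)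
    · intro h
      exact hqx p' hp' (h ▸ (hSmem p hp).1)
    · intro h
      exact hne (hφinj (h.symm))
  have hqA : ∀ p ∈ S, ∀ r, r ≠ x → r ≠ y → H.Adj x r → H.Adj x (φ r) →
      ¬H.Adj (φ p) r := by
    intro p hp r hrx hry har haφr hc
    obtain ⟨h1, h2⟩ := hSne p hp
    refine hAUG5' p r h2 h1 hry hrx ?_ ?_ (hSmem p hp).2 hc haφr
    · rintro rfl
      exact hqx r hp haφr
    · rintro rfl
      exact hqx p hp har
  have hqB : ∀ p ∈ S, ∀ r, r ≠ x → r ≠ y → H.Adj y r → H.Adj y (φ r) →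
      ¬H.Adj (φ p) r := by
    intro p hp r hrx hry har haφr hc
    obtain ⟨h1, h2⟩ := hSne p hp
    refine hAUG5 p r h1 h2 hrx hry ?_ ?_ (hSmem p hp).1 hc haφr
    · rintro rfl
      exact hqy r hp haφr
    · rintro rfl
      exact hqy p hp har
  -- the outside zone
  set Z : Finset (Fin n) := Finset.univ \ (X ∪ Y ∪ {x, y}) with hZdef
  have hmemZ : ∀ v, v ∈ Z ↔ (¬H.Adj x v ∧ ¬H.Adj y v ∧ v ≠ x ∧ v ≠ y) := by
    intro v
    rw [hZdef]
    simp only [Finset.mem_sdiff, Finset.mem_univ, true_and, Finset.mem_union,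
      Finset.mem_insert, Finset.mem_singleton, hmemX, hmemY]
    tauto
  set Sφ := S.image φ with hSφdef
  have hφpZ : ∀ p ∈ S, φ p ∈ Z := by
    intro p hp
    obtain ⟨h1, h2⟩ := hSne p hp
    rw [hmemZ]
    exact ⟨hqx p hp, hqy p hp, hφnx p h2, hφny p h1⟩
  have hSφZ : Sφ ⊆ Z := by
    intro v hv
    rw [hSφdef, Finset.mem_image] at hv
    obtain ⟨p, hp, rfl⟩ := hv
    exact hφpZ p hp
  set LZ := Z \ Sφ with hLZdef
  -- cardinalities
  have hSφcard : Sφ.card = S.card :=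
    Finset.card_image_of_injective _ hφinj
  have hSφleZ : Sφ.card ≤ Z.card := Finset.card_le_card hSφZ
  have hLZcard : LZ.card + S.card = Z.card := by
    rw [hLZdef, Finset.card_sdiff_of_subset hSφZ, hSφcard]
    omega

  have hZcard : Z.card + ((X ∪ Y).card + 2) = n := by
    have hdisj : Disjoint (X ∪ Y) ({x, y} : Finset (Fin n)) := by
      rw [Finset.disjoint_right]
      intro v hv
      rcases Finset.mem_insert.mp hv with rfl | hv'
      · simp only [Finset.mem_union]
        push_neg
        exact ⟨hxX, hxY⟩
      · rw [Finset.mem_singleton] at hv'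
        subst hv'
        simp only [Finset.mem_union]
        push_neg
        exact ⟨hyX, hyY⟩
    have hW : (X ∪ Y ∪ {x, y}).card = (X ∪ Y).card + 2 := by
      rw [Finset.card_union_of_disjoint hdisj, Finset.card_pair hxyne]
    have hWle : (X ∪ Y ∪ {x, y}).card ≤ n := by
      have := Finset.card_le_univ (X ∪ Y ∪ ({x, y} : Finset (Fin n)))
      simpa using this
    rw [hZdef, Finset.card_sdiff_of_subset (Finset.subset_univ _)]
    simp only [Finset.card_univ, Fintype.card_fin]
    omega
  have hXYS : (X ∪ Y).card + S.card = H.degree x + H.degree y := by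
    rw [hSdef]
    exact Finset.card_union_add_card_inter X Y
  -- degree bound for free ends
  have hdegq : ∀ p ∈ S, H.degree (φ p) ≤ S.card + 2 * LZ.card := by
    intro p hp
    obtain ⟨hpx, hpy⟩ := hSne p hp
    have hsub : H.neighborFinset (φ p) ⊆
        S ∪ LZ ∪ (((X ∪ Y) \ S).filter (fun r => φ r ∈ LZ)) := by
      intro r hr
      rw [SimpleGraph.mem_neighborFinset] at hr
      have hrx : r ≠ x := by rintro rfl; exact hqx p hp hr.symm
      have hry : r ≠ y := by rintro rfl; exact hqy p hp hr.symm
      simp only [Finset.mem_union, Finset.mem_filter, Finset.mem_sdiff]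
      by_cases hrS : r ∈ S
      · exact Or.inl (Or.inl hrS)
      · by_cases hrXY : r ∈ X ∪ Y
        · refine Or.inr ⟨⟨Finset.mem_union.mp hrXY |>.elim (fun h => Or.inl h)
            (fun h => Or.inr h), hrS⟩, ?_⟩
          have hfx : ¬H.Adj x (φ r) := by
            intro hc
            rcases Finset.mem_union.mp hrXY with hX' | hY'
            · exact hqA p hp r hrx hry ((hmemX r).mp hX') hc hr
            · exact hF2' r hry hrx ((hmemY r).mp hY') hc
          have hfy : ¬H.Adj y (φ r) := by
            intro hc
            rcases Finset.mem_union.mp hrXY with hX' | hY'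
            · exact hF2 r hrx hry ((hmemX r).mp hX') hc
            · exact hqB p hp r hrx hry ((hmemY r).mp hY') hc hr
          have hZr : φ r ∈ Z := (hmemZ _).mpr ⟨hfx, hfy, hφnx r hry, hφny r hrx⟩
          rw [hLZdef, Finset.mem_sdiff]
          refine ⟨hZr, fun hc => ?_⟩
          rw [hSφdef, Finset.mem_image] at hc
          obtain ⟨p', hp', hpe⟩ := hc
          exact hrS (hφinj hpe ▸ hp')
        · have hZr : r ∈ Z := by
            rw [hmemZ]
            refine ⟨fun hc => hrXY ?_, fun hc => hrXY ?_, hrx, hry⟩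
            · exact Finset.mem_union.mpr (Or.inl ((hmemX r).mpr hc))
            · exact Finset.mem_union.mpr (Or.inr ((hmemY r).mpr hc))
          refine Or.inl (Or.inr ?_)
          rw [hLZdef, Finset.mem_sdiff]
          refine ⟨hZr, fun hc => ?_⟩
          rw [hSφdef, Finset.mem_image] at hc
          obtain ⟨p', hp', hpe⟩ := hc
          subst hpe
          by_cases hpp : p = p'
          · subst hpp; exact H.irrefl hr
          · exact hqq p hp p' hp' hpp hr
    have h1 : H.degree (φ p) ≤ S.card + LZ.card +
        (((X ∪ Y) \ S).filter (fun r => φ r ∈ LZ)).card := by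
      calc H.degree (φ p) ≤ (S ∪ LZ ∪ (((X ∪ Y) \ S).filter (fun r => φ r ∈ LZ))).card :=
            Finset.card_le_card hsub
        _ ≤ (S ∪ LZ).card + (((X ∪ Y) \ S).filter (fun r => φ r ∈ LZ)).card :=
            Finset.card_union_le _ _
        _ ≤ S.card + LZ.card + (((X ∪ Y) \ S).filter (fun r => φ r ∈ LZ)).card := by
            have := Finset.card_union_le S LZ
            omega
    have h2 : (((X ∪ Y) \ S).filter (fun r => φ r ∈ LZ)).card ≤ LZ.card := by
      apply Finset.card_le_card_of_injOn φ
      · intro r hrm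
        exact (Finset.mem_filter.mp hrm).2
      · exact fun a _ b _ hab => hφinj hab
    omega
  -- σ facts, real casts
  have hdxdy := hσ x y hxyne hnadj
  have hLZreal : (LZ.card : ℝ) ≤ γ * n - 2 := by
    have hkey : LZ.card + (H.degree x + H.degree y) + 2 = n := by omega
    have hkey' : ((LZ.card + (H.degree x + H.degree y) + 2 : ℕ) : ℝ) = (n : ℝ) := by
      rw [hkey]
    push_cast at hkey'
    linarith
  by_cases hc2 : 2 ≤ S.card
  · -- main case: large shared neighborhood, build the sparse set T
    obtain ⟨p, hp, p', hp', hpp'⟩ := Finset.one_lt_card.mp hc2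
    have hqqne : φ p ≠ φ p' := fun h => hpp' (hφinj h)
    have sqq := hσ (φ p) (φ p') hqqne (hqq p hp p' hp' hpp')
    have hdq1 := hdegq p hp
    have hdq2 := hdegq p' hp'
    have hSbig : (n : ℝ) - γ * n ≤ 2 * S.card + 4 * LZ.card := by
      have c1 : (H.degree (φ p) : ℝ) ≤ S.card + 2 * LZ.card := by exact_mod_cast hdq1
      have c2 : (H.degree (φ p') : ℝ) ≤ S.card + 2 * LZ.card := by exact_mod_cast hdq2
      linarith
    -- the set of untouched vertices
    set s₀ : Finset (Fin n) := Finset.univ \ ({x, y} ∪ S ∪ Sφ) with hs₀def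
    have hmems₀ : ∀ v, v ∈ s₀ ↔ (v ≠ x ∧ v ≠ y ∧ v ∉ S ∧ v ∉ Sφ) := by
      intro v
      rw [hs₀def]
      simp only [Finset.mem_sdiff, Finset.mem_univ, true_and, Finset.mem_union,
        Finset.mem_insert, Finset.mem_singleton]
      tauto
    have hs₀closed : ∀ v ∈ s₀, φ v ∈ s₀ := by
      intro v hv
      rw [hmems₀] at hv ⊢
      obtain ⟨h1, h2, h3, h4⟩ := hv
      refine ⟨hφnx v h2, hφny v h1, fun hc => h4 ?_, fun hc => h3 ?_⟩
      · rw [hSφdef, Finset.mem_image]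
        exact ⟨φ v, hc, hinv v⟩
      · rw [hSφdef, Finset.mem_image] at hc
        obtain ⟨p'', hp'', hpe⟩ := hc
        exact (hφinj hpe) ▸ hp''
    have hhalf := half_pairing φ hinv s₀ hs₀closed (fun v _ => hneφ v)
    set D := s₀.filter (fun w => w < φ w) with hDdef
    -- cardinality of s₀
    have hxZ : x ∉ Z := by rw [hmemZ]; tauto
    have hyZ : y ∉ Z := by rw [hmemZ]; tauto
    have hdisj1 : Disjoint ({x, y} : Finset (Fin n)) S := by
      rw [Finset.disjoint_left]
      intro a ha haS
      obtain ⟨e1, e2⟩ := hSne a haS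
      rcases Finset.mem_insert.mp ha with rfl | ha'
      · exact e1 rfl
      · rw [Finset.mem_singleton] at ha'
        exact e2 ha'
    have hSZ : ∀ a ∈ S, a ∉ Z := by
      intro a haS haZ
      rw [hmemZ] at haZ
      exact haZ.1 (hSmem a haS).1
    have hdisj2 : Disjoint ({x, y} ∪ S) Sφ := by
      rw [Finset.disjoint_left]
      intro a ha haφ
      have haZ : a ∈ Z := hSφZ haφ
      rcases Finset.mem_union.mp ha with ha' | ha'
      · rcases Finset.mem_insert.mp ha' with rfl | ha''
        · exact hxZ haZ
        · rw [Finset.mem_singleton] at ha''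
          subst ha''
          exact hyZ haZ
      · exact hSZ a ha' haZ
    have hcardU : ({x, y} ∪ S ∪ Sφ).card = 2 + S.card + S.card := by
      rw [Finset.card_union_of_disjoint hdisj2, Finset.card_union_of_disjoint hdisj1,
        Finset.card_pair hxyne, hSφcard]
    have hULe : ({x, y} ∪ S ∪ Sφ).card ≤ n := by
      have := Finset.card_le_univ ({x, y} ∪ S ∪ Sφ)
      simpa using this
    have hs₀card : s₀.card + (2 + S.card + S.card) = n := by
      rw [hs₀def, Finset.card_sdiff_of_subset (Finset.subset_univ _)]
      simp only [Finset.card_univ, Fintype.card_fin]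
      omega
    -- the sparse set T
    set T := ({x, y} ∪ Sφ) ∪ D with hTdef
    have hDs₀ : D ⊆ s₀ := Finset.filter_subset _ _
    have hdisjT : Disjoint ({x, y} ∪ Sφ) D := by
      rw [Finset.disjoint_left]
      intro a ha haD
      have has₀ : a ∈ s₀ := hDs₀ haD
      rw [hmems₀] at has₀
      rcases Finset.mem_union.mp ha with ha' | ha'
      · rcases Finset.mem_insert.mp ha' with rfl | ha''
        · exact has₀.1 rfl
        · rw [Finset.mem_singleton] at ha''
          exact has₀.2.1 ha''
      · exact has₀.2.2.2 ha'
    have hdisjxySφ : Disjoint ({x, y} : Finset (Fin n)) Sφ := by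
      rw [Finset.disjoint_left]
      intro a ha haφ
      have haZ : a ∈ Z := hSφZ haφ
      rcases Finset.mem_insert.mp ha with rfl | ha'
      · exact hxZ haZ
      · rw [Finset.mem_singleton] at ha'
        subst ha'
        exact hyZ haZ
    have hTcard : T.card = 2 + S.card + D.card := by
      rw [hTdef, Finset.card_union_of_disjoint hdisjT,
        Finset.card_union_of_disjoint hdisjxySφ, Finset.card_pair hxyne, hSφcard]
    have hind : ∀ a ∈ T, ∀ b ∈ T, a ∉ D → b ∉ D → ¬H.Adj a b := by
      intro a haT b hbT haD hbD hadj
      have haU : a ∈ {x, y} ∪ Sφ := by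
        rcases Finset.mem_union.mp haT with h | h
        · exact h
        · exact absurd h haD
      have hbU : b ∈ {x, y} ∪ Sφ := by
        rcases Finset.mem_union.mp hbT with h | h
        · exact h
        · exact absurd h hbD
      have hmemU : ∀ c, c ∈ ({x, y} ∪ Sφ : Finset (Fin n)) →
          c = x ∨ c = y ∨ ∃ pc ∈ S, φ pc = c := by
        intro c hc
        rcases Finset.mem_union.mp hc with h | h
        · rcases Finset.mem_insert.mp h with rfl | h'
          · exact Or.inl rfl
          · rw [Finset.mem_singleton] at h'
            exact Or.inr (Or.inl h')
        · rw [hSφdef, Finset.mem_image] at h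
          exact Or.inr (Or.inr h)
      rcases hmemU a haU with rfl | rfl | ⟨pa, hpa, rfl⟩ <;>
        rcases hmemU b hbU with rfl | rfl | ⟨pb, hpb, rfl⟩
      · exact H.irrefl hadj
      · exact hnadj hadj
      · exact hqx pb hpb hadj
      · exact hnadj hadj.symm
      · exact H.irrefl hadj
      · exact hqy pb hpb hadj
      · exact hqx pa hpa hadj.symm
      · exact hqy pa hpa hadj.symm
      · by_cases hab : pa = pb
        · subst hab
          exact H.irrefl hadj
        · exact hqq pa hpa pb hpb hab hadj
    have hedge := edges_in_bound H T D hind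
    clear_value T D s₀ LZ Sφ Z S X Y
    have h2T : 2 * T.card = n + 2 := by omega
    refine ⟨T, ?_, ?_⟩
    · have : ((2 * T.card : ℕ) : ℝ) = ((n + 2 : ℕ) : ℝ) := by rw [h2T]
      push_cast at this
      linarith
    · have hedgeR : ((H.edgeFinset.filter (fun e => e ∈ T.sym2)).card : ℝ)
          ≤ (D.card : ℝ) * T.card := by exact_mod_cast hedge
      have hDle : (D.card : ℝ) ≤ (5 * (γ * n) - 10) / 2 := by
        have e1 : ((2 * D.card : ℕ) : ℝ) = (s₀.card : ℝ) := Nat.cast_inj.mpr hhalf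
        have e2 : ((s₀.card + (2 + S.card + S.card) : ℕ) : ℝ) = (n : ℝ) := by rw [hs₀card]
        push_cast at e1 e2
        linarith
      have hTle : ((T.card : ℕ) : ℝ) = ((n : ℝ) + 2) / 2 := by
        have : ((2 * T.card : ℕ) : ℝ) = ((n + 2 : ℕ) : ℝ) := by rw [h2T]
        push_cast at this
        linarith
      have hDpos : (0:ℝ) ≤ (D.card : ℝ) := Nat.cast_nonneg _
      have hTpos : (0:ℝ) ≤ (T.card : ℝ) := Nat.cast_nonneg _
      have hmul : (D.card : ℝ) * T.card ≤ ((5 * (γ * n) - 10) / 2) * (((n : ℝ) + 2) / 2) := by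
        rw [hTle]
        apply mul_le_mul_of_nonneg_right hDle
        linarith
      have hA : (0:ℝ) ≤ γ * n := by linarith
      have k1 : (γ * n) * 10 ≤ (γ * n) * n := by
        apply mul_le_mul_of_nonneg_left _ hA
        linarith
      have hfinal : ((5 * (γ * n) - 10) / 2) * (((n : ℝ) + 2) / 2) ≤ 2 * γ * (n:ℝ)^2 := by
        nlinarith [k1, mul_nonneg hA hn0, hn0]
      linarith
  · -- degenerate case: exactly one shared neighbour, contradiction
    obtain ⟨p, hp⟩ := hS
    clear_value LZ Sφ Z S X Y
    have hSone : S.card = 1 := by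
      have h1 : 1 ≤ S.card := Finset.card_pos.mpr ⟨p, hp⟩
      omega
    have hqZ := hφpZ p hp
    rw [hmemZ] at hqZ
    obtain ⟨hf1, hf2, hf3, hf4⟩ := hqZ
    have s1 := hσ x (φ p) (Ne.symm hf3) hf1
    have s2 := hσ y (φ p) (Ne.symm hf4) hf2
    have hdq := hdegq p hp
    exfalso
    have c1 : (H.degree (φ p) : ℝ) ≤ S.card + 2 * LZ.card := by exact_mod_cast hdq
    have c2 : ((S.card : ℕ) : ℝ) = 1 := by rw [hSone]; norm_num
    have c3 : (H.degree x : ℝ) + H.degree y ≤ (n : ℝ) - 1 := by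
      have hxy1 : H.degree x + H.degree y + 1 ≤ n := by omega
      have := (Nat.cast_le (α := ℝ)).mpr hxy1
      push_cast at this
      linarith
    linarith

end PairMain
section CliquePM
open Finset

variable {V : Type*} [Fintype V] [DecidableEq V]

lemma pm_of_two_cliques (H : SimpleGraph V) (Q : Finset V)
    (hQ : ∀ a ∈ Q, ∀ b ∈ Q, a ≠ b → H.Adj a b)
    (hR : ∀ a, a ∉ Q → ∀ b, b ∉ Q → a ≠ b → H.Adj a b)
    (hQeven : Even Q.card) (hReven : Even (Finset.univ \ Q).card) :
    ∃ M : H.Subgraph, M.IsPerfectMatching := by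
  classical
  obtain ⟨ψ1, h1i, h1m, h1id⟩ := pairup Q.card Q rfl hQeven
  obtain ⟨ψ2, h2i, h2m, h2id⟩ := pairup (Finset.univ \ Q).card (Finset.univ \ Q) rfl hReven
  have hmemR : ∀ v : V, v ∉ Q → v ∈ Finset.univ \ Q := by
    intro v hv
    rw [Finset.mem_sdiff]
    exact ⟨Finset.mem_univ v, hv⟩
  refine matchFun H (fun v => if v ∈ Q then ψ1 v else ψ2 v) ?_ ?_ ?_
  · intro v
    by_cases hv : v ∈ Q
    · have h1 : ψ1 v ∈ Q := (h1m v hv).1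
      simp only [if_pos hv, if_pos h1]
      exact h1i v
    · have h2 : ψ2 v ∈ Finset.univ \ Q := (h2m v (hmemR v hv)).1
      have h2' : ψ2 v ∉ Q := (Finset.mem_sdiff.mp h2).2
      simp only [if_neg hv, if_neg h2']
      exact h2i v
  · intro v
    by_cases hv : v ∈ Q
    · simp only [if_pos hv]
      exact (h1m v hv).2
    · simp only [if_neg hv]
      exact (h2m v (hmemR v hv)).2
  · intro v
    by_cases hv : v ∈ Q
    · simp only [if_pos hv]
      exact hQ v hv (ψ1 v) (h1m v hv).1 (Ne.symm (h1m v hv).2)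
    · simp only [if_neg hv]
      have h2 : ψ2 v ∈ Finset.univ \ Q := (h2m v (hmemR v hv)).1
      exact hR v hv (ψ2 v) (Finset.mem_sdiff.mp h2).2 (Ne.symm (h2m v (hmemR v hv)).2)

lemma pm_of_two_cliques_bridge (H : SimpleGraph V) (Q : Finset V)
    (hQ : ∀ a ∈ Q, ∀ b ∈ Q, a ≠ b → H.Adj a b)
    (hR : ∀ a, a ∉ Q → ∀ b, b ∉ Q → a ≠ b → H.Adj a b)
    {a b : V} (ha : a ∈ Q) (hb : b ∉ Q) (hab : H.Adj a b)
    (hQodd : Odd Q.card) (hRodd : Odd (Finset.univ \ Q).card) :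
    ∃ M : H.Subgraph, M.IsPerfectMatching := by
  classical
  have hne : a ≠ b := fun h => hb (h ▸ ha)
  have hbR : b ∈ Finset.univ \ Q := Finset.mem_sdiff.mpr ⟨Finset.mem_univ b, hb⟩
  have hQe : Even (Q.erase a).card := by
    rw [Finset.card_erase_of_mem ha]
    rcases hQodd with ⟨k, hk⟩
    exact ⟨k, by omega⟩
  have hRe : Even ((Finset.univ \ Q).erase b).card := by
    rw [Finset.card_erase_of_mem hbR]
    rcases hRodd with ⟨k, hk⟩
    exact ⟨k, by omega⟩
  obtain ⟨ψ1, h1i, h1m, h1id⟩ := pairup (Q.erase a).card (Q.erase a) rfl hQe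
  obtain ⟨ψ2, h2i, h2m, h2id⟩ := pairup ((Finset.univ \ Q).erase b).card
    ((Finset.univ \ Q).erase b) rfl hRe
  refine matchFun H
    (fun v => if v = a then b else if v = b then a else if v ∈ Q then ψ1 v else ψ2 v) ?_ ?_ ?_
  · intro v
    by_cases hva : v = a
    · simp only [if_pos hva, if_neg (Ne.symm hne), if_pos rfl]
      exact hva.symm
    · by_cases hvb : v = b
      · simp only [if_neg hva, if_pos hvb, if_pos rfl]
        exact hvb.symm
      · simp only [if_neg hva, if_neg hvb]
        by_cases hv : v ∈ Q
        · have hv' : v ∈ Q.erase a := Finset.mem_erase.mpr ⟨hva, hv⟩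
          have h1 : ψ1 v ∈ Q.erase a := (h1m v hv').1
          have e1 : ψ1 v ≠ a := (Finset.mem_erase.mp h1).1
          have e2 : ψ1 v ∈ Q := (Finset.mem_erase.mp h1).2
          have e3 : ψ1 v ≠ b := fun h => hb (h ▸ e2)
          simp only [if_pos hv, if_neg e1, if_neg e3, if_pos e2]
          exact h1i v
        · have hv' : v ∈ (Finset.univ \ Q).erase b := by
            rw [Finset.mem_erase, Finset.mem_sdiff]
            exact ⟨hvb, Finset.mem_univ v, hv⟩
          have h2 : ψ2 v ∈ (Finset.univ \ Q).erase b := (h2m v hv').1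
          have e1 : ψ2 v ≠ b := (Finset.mem_erase.mp h2).1
          have e2 : ψ2 v ∉ Q := (Finset.mem_sdiff.mp (Finset.mem_erase.mp h2).2).2
          have e3 : ψ2 v ≠ a := fun h => e2 (h ▸ ha)
          simp only [if_neg hv, if_neg e1, if_neg e2, if_neg e3]
          exact h2i v
  · intro v
    by_cases hva : v = a
    · simp only [if_pos hva]
      rw [hva]
      exact Ne.symm hne
    · by_cases hvb : v = b
      · simp only [if_neg hva, if_pos hvb]
        rw [hvb]
        exact hne
      · simp only [if_neg hva, if_neg hvb]
        by_cases hv : v ∈ Q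
        · have hv' : v ∈ Q.erase a := Finset.mem_erase.mpr ⟨hva, hv⟩
          simp only [if_pos hv]
          exact (h1m v hv').2
        · have hv' : v ∈ (Finset.univ \ Q).erase b := by
            rw [Finset.mem_erase, Finset.mem_sdiff]
            exact ⟨hvb, Finset.mem_univ v, hv⟩
          simp only [if_neg hv]
          exact (h2m v hv').2
  · intro v
    by_cases hva : v = a
    · simp only [if_pos hva]
      rw [hva]
      exact hab
    · by_cases hvb : v = b
      · simp only [if_neg hva, if_pos hvb]
        rw [hvb]
        exact hab.symm
      · simp only [if_neg hva, if_neg hvb]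
        by_cases hv : v ∈ Q
        · have hv' : v ∈ Q.erase a := Finset.mem_erase.mpr ⟨hva, hv⟩
          have h1 : ψ1 v ∈ Q.erase a := (h1m v hv').1
          simp only [if_pos hv]
          exact hQ v hv (ψ1 v) (Finset.mem_erase.mp h1).2 (Ne.symm (h1m v hv').2)
        · have hv' : v ∈ (Finset.univ \ Q).erase b := by
            rw [Finset.mem_erase, Finset.mem_sdiff]
            exact ⟨hvb, Finset.mem_univ v, hv⟩
          have h2 : ψ2 v ∈ (Finset.univ \ Q).erase b := (h2m v hv').1
          simp only [if_neg hv]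
          exact hR v hv (ψ2 v) (Finset.mem_sdiff.mp (Finset.mem_erase.mp h2).2).2
            (Ne.symm (h2m v hv').2)

end CliquePM
section Main
open Finset

lemma clique_small {n : ℕ} {γ : ℝ}
    (G : SimpleGraph (Fin n)) [DecidableRel G.Adj]
    (hσ : ∀ x y : Fin n, x ≠ y → ¬ G.Adj x y →
      (n : ℝ) - γ * n ≤ (G.degree x : ℝ) + (G.degree y : ℝ)) :
    ∀ c : G.ConnectedComponent, (c.supp.ncard : ℝ) ≤ (1 - γ)/2 * n → G.IsClique c.supp := by
  intro c hc
  rw [SimpleGraph.isClique_iff]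
  intro v hv w hw hvw
  by_contra hnadj
  have hσ' := hσ v w hvw hnadj
  classical
  set F : Finset (Fin n) := Finset.univ.filter (fun u => G.connectedComponentMk u = c) with hF
  have hsupp : c.supp = ↑F := by
    ext u
    simp [hF, SimpleGraph.ConnectedComponent.mem_supp_iff]
  have hncard : c.supp.ncard = F.card := by rw [hsupp, Set.ncard_coe_finset]
  have hdeg : ∀ u, u ∈ c.supp → G.degree u + 1 ≤ F.card := by
    intro u hu
    rw [SimpleGraph.ConnectedComponent.mem_supp_iff] at hu
    have hsub : insert u (G.neighborFinset u) ⊆ F := by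
      intro z hz
      rw [hF, Finset.mem_filter]
      refine ⟨Finset.mem_univ _, ?_⟩
      rcases Finset.mem_insert.mp hz with rfl | hz'
      · exact hu
      · rw [SimpleGraph.mem_neighborFinset] at hz'
        rw [← hu]
        exact SimpleGraph.ConnectedComponent.eq.mpr hz'.symm.reachable
    have := Finset.card_le_card hsub
    rwa [Finset.card_insert_of_notMem (by
      rw [SimpleGraph.mem_neighborFinset]; exact fun h => G.irrefl h)] at this
  have hv' := hdeg v hv
  have hw' := hdeg w hw
  have hvr : (G.degree v : ℝ) + 1 ≤ (F.card : ℝ) := by exact_mod_cast hv'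
  have hwr : (G.degree w : ℝ) + 1 ≤ (F.card : ℝ) := by exact_mod_cast hw'
  have hfr : (F.card : ℝ) ≤ (1 - γ)/2 * n := by
    rw [← hncard] at *
    exact_mod_cast hc
  linarith

theorem statement10' :
    ∃ γ0 : ℝ, 0 < γ0 ∧ ∀ γ : ℝ, 0 < γ → γ ≤ γ0 →
      ∃ n0 : ℕ, ∀ n : ℕ, n0 ≤ n → Even n →
        ∀ (G : SimpleGraph (Fin n)) [DecidableRel G.Adj],
          (∀ x y : Fin n, x ≠ y → ¬ G.Adj x y →
            (n : ℝ) - γ * (n : ℝ) ≤ (G.degree x : ℝ) + (G.degree y : ℝ)) →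
          ((∃ M : G.Subgraph, M.IsPerfectMatching) ∨
            (∃ T : Finset (Fin n), (n : ℝ) / 2 ≤ (T.card : ℝ) ∧
              ((G.edgeFinset.filter (fun e => e ∈ T.sym2)).card : ℝ) ≤ 2 * γ * (n : ℝ) ^ 2) ∨
            (∃ c₁ c₂ : G.ConnectedComponent, c₁ ≠ c₂ ∧
              (∀ c : G.ConnectedComponent, c = c₁ ∨ c = c₂) ∧
              Odd c₁.supp.ncard ∧ Odd c₂.supp.ncard ∧
              (∀ c : G.ConnectedComponent,
                (c.supp.ncard : ℝ) ≤ (1 - γ) / 2 * (n : ℝ) → G.IsClique c.supp))) := by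
  refine ⟨1/100, by norm_num, ?_⟩
  intro γ hγ0 hγ
  refine ⟨max 4 ⌈(1000:ℝ)/γ⌉₊, ?_⟩
  intro n hn heven G instG hσG
  have hγn : (1000:ℝ) ≤ γ * n := by
    have h1 : ((1000:ℝ)/γ) ≤ (⌈(1000:ℝ)/γ⌉₊ : ℝ) := Nat.le_ceil _
    have h2 : (⌈(1000:ℝ)/γ⌉₊ : ℝ) ≤ (n : ℝ) := by
      exact_mod_cast le_trans (le_max_right _ _) hn
    have h3 : ((1000:ℝ)/γ) ≤ (n : ℝ) := le_trans h1 h2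
    calc (1000:ℝ) = (1000/γ) * γ := by field_simp
      _ ≤ (n : ℝ) * γ := mul_le_mul_of_nonneg_right h3 (le_of_lt hγ0)
      _ = γ * n := mul_comm _ _
  by_cases hPM : ∃ M : G.Subgraph, M.IsPerfectMatching
  · exact Or.inl hPM
  have hfree : G.IsMatchingFree := fun M hM => hPM ⟨M, hM⟩
  obtain ⟨H, hGH, hHfree, hHmax⟩ := SimpleGraph.exists_maximal_isMatchingFree hfree
  letI : DecidableRel H.Adj := Classical.decRel _
  have hσH : ∀ x y : Fin n, x ≠ y → ¬ H.Adj x y →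
      (n : ℝ) - γ * n ≤ (H.degree x : ℝ) + (H.degree y : ℝ) := by
    intro x y hxy hnadj
    have hng : ¬G.Adj x y := fun h => hnadj (hGH h)
    have h1 := hσG x y hxy hng
    have d1 : (G.degree x : ℝ) ≤ (H.degree x : ℝ) := by exact_mod_cast degree_mono hGH x
    have d2 : (G.degree y : ℝ) ≤ (H.degree y : ℝ) := by exact_mod_cast degree_mono hGH y
    linarith
  by_cases hex : ∃ x y : Fin n, x ≠ y ∧ ¬H.Adj x y ∧
      (H.neighborFinset x ∩ H.neighborFinset y).Nonempty
  · -- sparse-half case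
    refine Or.inr (Or.inl ?_)
    obtain ⟨x, y, hxy, hnadj, hS⟩ := hex
    obtain ⟨T, hT1, hT2⟩ := pair_main hγ0 hγ hγn heven H hHfree
      (fun G' h => hHmax G' h) hσH hxy hnadj hS
    refine ⟨T, hT1, ?_⟩
    have hsub : G.edgeFinset.filter (fun e => e ∈ T.sym2) ⊆
        H.edgeFinset.filter (fun e => e ∈ T.sym2) :=
      Finset.filter_subset_filter _ (SimpleGraph.edgeFinset_mono hGH)
    have := Finset.card_le_card hsub
    have hcast : ((G.edgeFinset.filter (fun e => e ∈ T.sym2)).card : ℝ) ≤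
        ((H.edgeFinset.filter (fun e => e ∈ T.sym2)).card : ℝ) := by exact_mod_cast this
    linarith
  · -- two-cliques case
    refine Or.inr (Or.inr ?_)
    push_neg at hex
    have hc0 : ∀ x y : Fin n, x ≠ y → ¬H.Adj x y →
        H.neighborFinset x ∩ H.neighborFinset y = ∅ := by
      intro x y h1 h2
      exact hex x y h1 h2
    -- a nonadjacent pair exists
    have hnadjex : ∃ x y : Fin n, x ≠ y ∧ ¬H.Adj x y := by
      by_contra hall
      push_neg at hall
      obtain ⟨ψ, hi, hm, hid⟩ := pairup n (Finset.univ : Finset (Fin n))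
        (by simp) heven
      obtain ⟨M, hM⟩ := matchFun H ψ hi (fun v => (hm v (Finset.mem_univ v)).2)
        (fun v => (hall v (ψ v) (Ne.symm (hm v (Finset.mem_univ v)).2)))
      exact hHfree M hM
    obtain ⟨x₀, y₀, hxy0, hnadj0⟩ := hnadjex
    set Q : Finset (Fin n) := insert y₀ (H.neighborFinset y₀) with hQdef
    have hy₀Q : y₀ ∈ Q := Finset.mem_insert_self _ _
    have hx₀Q : x₀ ∉ Q := by
      rw [hQdef, Finset.mem_insert]
      push_neg
      refine ⟨hxy0, ?_⟩
      rw [SimpleGraph.mem_neighborFinset]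
      exact fun h => hnadj0 h.symm
    have hQclique : ∀ a ∈ Q, ∀ b ∈ Q, a ≠ b → H.Adj a b := by
      intro a ha b hb hab
      by_contra hnadj'
      have hdisj := hc0 a b hab hnadj'
      rcases Finset.mem_insert.mp ha with rfl | ha'
      · rcases Finset.mem_insert.mp hb with rfl | hb'
        · exact hab rfl
        · exact hnadj' ((SimpleGraph.mem_neighborFinset _ _ _).mp hb')
      · rcases Finset.mem_insert.mp hb with rfl | hb'
        · exact hnadj' ((SimpleGraph.mem_neighborFinset _ _ _).mp ha').symm
        · have hmm : y₀ ∈ H.neighborFinset a ∩ H.neighborFinset b := by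
            rw [Finset.mem_inter, SimpleGraph.mem_neighborFinset,
              SimpleGraph.mem_neighborFinset]
            exact ⟨((SimpleGraph.mem_neighborFinset _ _ _).mp ha').symm,
                   ((SimpleGraph.mem_neighborFinset _ _ _).mp hb').symm⟩
          rw [hdisj] at hmm
          exact Finset.notMem_empty _ hmm
    have hRclique : ∀ a, a ∉ Q → ∀ b, b ∉ Q → a ≠ b → H.Adj a b := by
      intro a ha b hb hab
      by_contra hnadj'
      have hay : y₀ ≠ a := fun h => ha (h ▸ hy₀Q)
      have hby : y₀ ≠ b := fun h => hb (h ▸ hy₀Q)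
      have hna : ¬H.Adj y₀ a := fun h => ha (by
        rw [hQdef]
        exact Finset.mem_insert_of_mem ((SimpleGraph.mem_neighborFinset _ _ _).mpr h))
      have hnb : ¬H.Adj y₀ b := fun h => hb (by
        rw [hQdef]
        exact Finset.mem_insert_of_mem ((SimpleGraph.mem_neighborFinset _ _ _).mpr h))
      exact triple_contra (by simp) hγ0 hγ H hσH hay hby hab hna hnb hnadj'
        (hc0 y₀ a hay hna) (hc0 y₀ b hby hnb) (hc0 a b hab hnadj')
    -- parity
    have hQRcard : Q.card + (Finset.univ \ Q).card = n := by
      rw [Finset.card_sdiff_of_subset (Finset.subset_univ _)]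
      have h1 := Finset.card_le_univ Q
      simp only [Finset.card_univ, Fintype.card_fin] at *
      omega
    have hQodd : Odd Q.card := by
      rcases Nat.even_or_odd Q.card with he | ho
      · exfalso
        have hRe : Even (Finset.univ \ Q).card := by
          rcases heven with ⟨m, hm⟩
          rcases he with ⟨k, hk⟩
          exact ⟨m - k, by omega⟩
        obtain ⟨M, hM⟩ := pm_of_two_cliques H Q hQclique hRclique he hRe
        exact hHfree M hM
      · exact ho
    have hRodd : Odd (Finset.univ \ Q).card := by
      rcases hQodd with ⟨k, hk⟩
      rcases heven with ⟨m, hm⟩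
      exact ⟨m - k - 1, by omega⟩
    have hcross : ∀ a ∈ Q, ∀ b, b ∉ Q → ¬H.Adj a b := by
      intro a ha b hb hadj
      obtain ⟨M, hM⟩ := pm_of_two_cliques_bridge H Q hQclique hRclique ha hb hadj hQodd hRodd
      exact hHfree M hM
    -- back to the original graph G
    have hGsep : ∀ a b : Fin n, a ∈ Q → b ∉ Q → ¬G.Adj a b :=
      fun a b ha hb h => hcross a ha b hb (hGH h)
    have hside : ∀ {a b : Fin n}, G.Reachable a b → (a ∈ Q ↔ b ∈ Q) :=
      fun {a b} h => side_of_reachable hGsep h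
    have hry : ¬G.Reachable y₀ x₀ := fun h => hx₀Q ((hside h).mp hy₀Q)
    have hc12 : G.connectedComponentMk y₀ ≠ G.connectedComponentMk x₀ := by
      intro h
      exact hry (SimpleGraph.ConnectedComponent.eq.mp h)
    have hall2 : ∀ c : G.ConnectedComponent,
        c = G.connectedComponentMk y₀ ∨ c = G.connectedComponentMk x₀ := by
      intro c
      by_contra hcc
      push_neg at hcc
      obtain ⟨v, hv⟩ := c.exists_rep
      have hv1 : ¬G.Reachable v y₀ := fun h => hcc.1 (by
        rw [← hv]
        exact SimpleGraph.ConnectedComponent.sound h)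
      have hv2 : ¬G.Reachable v x₀ := fun h => hcc.2 (by
        rw [← hv]
        exact SimpleGraph.ConnectedComponent.sound h)
      have hvy : v ≠ y₀ := fun h => hv1 (h ▸ SimpleGraph.Reachable.refl v)
      have hvx : v ≠ x₀ := fun h => hv2 (h ▸ SimpleGraph.Reachable.refl v)
      have hn1 : ¬G.Adj v y₀ := fun h => hv1 h.reachable
      have hn2 : ¬G.Adj v x₀ := fun h => hv2 h.reachable
      have hn3 : ¬G.Adj y₀ x₀ := fun h => hry h.reachable
      have hd1 : G.neighborFinset v ∩ G.neighborFinset y₀ = ∅ := by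
        rw [Finset.eq_empty_iff_forall_notMem]
        intro w hw
        rw [Finset.mem_inter, SimpleGraph.mem_neighborFinset,
          SimpleGraph.mem_neighborFinset] at hw
        exact hv1 (hw.1.reachable.trans hw.2.reachable.symm)
      have hd2 : G.neighborFinset v ∩ G.neighborFinset x₀ = ∅ := by
        rw [Finset.eq_empty_iff_forall_notMem]
        intro w hw
        rw [Finset.mem_inter, SimpleGraph.mem_neighborFinset,
          SimpleGraph.mem_neighborFinset] at hw
        exact hv2 (hw.1.reachable.trans hw.2.reachable.symm)
      have hd3 : G.neighborFinset y₀ ∩ G.neighborFinset x₀ = ∅ := by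
        rw [Finset.eq_empty_iff_forall_notMem]
        intro w hw
        rw [Finset.mem_inter, SimpleGraph.mem_neighborFinset,
          SimpleGraph.mem_neighborFinset] at hw
        exact hry (hw.1.reachable.trans hw.2.reachable.symm)
      exact triple_contra (by simp) hγ0 hγ G hσG hvy hvx hxy0.symm hn1 hn2 hn3 hd1 hd2 hd3
    have hsupp1 : (G.connectedComponentMk y₀).supp = ↑Q := by
      ext v
      rw [SimpleGraph.ConnectedComponent.mem_supp_iff, Finset.mem_coe]
      constructor
      · intro h
        have hr : G.Reachable v y₀ := SimpleGraph.ConnectedComponent.eq.mp h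
        exact (hside hr).mpr hy₀Q
      · intro hvQ
        rcases hall2 (G.connectedComponentMk v) with h | h
        · exact h
        · exfalso
          have hr : G.Reachable v x₀ := SimpleGraph.ConnectedComponent.eq.mp h
          exact hx₀Q ((hside hr).mp hvQ)
    have hsupp2 : (G.connectedComponentMk x₀).supp = ↑(Finset.univ \ Q) := by
      ext v
      rw [SimpleGraph.ConnectedComponent.mem_supp_iff, Finset.mem_coe, Finset.mem_sdiff]
      constructor
      · intro h
        have hr : G.Reachable v x₀ := SimpleGraph.ConnectedComponent.eq.mp h
        exact ⟨Finset.mem_univ v, fun hvQ => hx₀Q ((hside hr).mp hvQ)⟩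
      · intro hvQ
        rcases hall2 (G.connectedComponentMk v) with h | h
        · exfalso
          have hr : G.Reachable v y₀ := SimpleGraph.ConnectedComponent.eq.mp h
          exact hvQ.2 ((hside hr).mpr hy₀Q)
        · exact h
    refine ⟨G.connectedComponentMk y₀, G.connectedComponentMk x₀, hc12, hall2, ?_, ?_, ?_⟩
    · rw [hsupp1, Set.ncard_coe_finset]
      exact hQodd
    · rw [hsupp2, Set.ncard_coe_finset]
      exact hRodd
    · exact clique_small G hσG

end Main

/-- There exists `γ0 > 0` such that for every `γ ∈ (0, γ0]` there exists `n0` such that for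
every even `n ≥ n0`: if `G` is an `n`-vertex graph with `σ(G) ≥ n - γn`, then (i) `G` has
a perfect matching, or (ii) `G` contains a `2γ`-independent set of size at least `n/2`, or
(iii) `G` has exactly two connected components, both of odd order, and every component of
order at most `(1-γ)n/2` induces a clique. -/
theorem statement10 :
    ∃ γ0 : ℝ, 0 < γ0 ∧ ∀ γ : ℝ, 0 < γ → γ ≤ γ0 →
      ∃ n0 : ℕ, ∀ n : ℕ, n0 ≤ n → Even n →
        ∀ (G : SimpleGraph (Fin n)) [DecidableRel G.Adj],
          (∀ x y : Fin n, x ≠ y → ¬ G.Adj x y →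
            (n : ℝ) - γ * (n : ℝ) ≤ (G.degree x : ℝ) + (G.degree y : ℝ)) →
          ((∃ M : G.Subgraph, M.IsPerfectMatching) ∨
            (∃ T : Finset (Fin n), (n : ℝ) / 2 ≤ (T.card : ℝ) ∧
              (edgesWithin G T : ℝ) ≤ 2 * γ * (n : ℝ) ^ 2) ∨
            (∃ c₁ c₂ : G.ConnectedComponent, c₁ ≠ c₂ ∧
              (∀ c : G.ConnectedComponent, c = c₁ ∨ c = c₂) ∧
              Odd c₁.supp.ncard ∧ Odd c₂.supp.ncard ∧
              (∀ c : G.ConnectedComponent,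
                (c.supp.ncard : ℝ) ≤ (1 - γ) / 2 * (n : ℝ) → G.IsClique c.supp))) := by
  obtain ⟨γ0, hγ0, h⟩ := statement10'
  refine ⟨γ0, hγ0, ?_⟩
  intro γ h1 h2
  obtain ⟨n0, hh⟩ := h γ h1 h2
  refine ⟨n0, ?_⟩
  intro n hn he G inst hσ
  rcases hh n hn he G hσ with h' | h' | h'
  · exact Or.inl h'
  · obtain ⟨T, a, b⟩ := h'
    refine Or.inr (Or.inl ⟨T, a, ?_⟩)
    exact b
  · exact Or.inr (Or.inr h')
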